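/- Let B be an event with P(B) > 0. Let Y⁰, Y¹, M₀, M₁ : Ω → {0,1} be random variables satisfying M₀(ω) ≤ M₁(ω) and Y⁰(ω) ≤ Y¹(ω) for all ω (monotonicity), and define Z_a = M_a·Y¹ + (1 − M_a)·Y⁰ for a ∈ {0,1}. Assume that for every a, b ∈ {0,1}, Pr(Y^b = 1, M_a = 1 | B) = Pr(Y^b = 1 | B) · Pr(M_a = 1 | B). Then E[Z₁ − Z₀ | B] ≤ E[Y¹ − Y⁰ | B]. -/
import Mathlib


open MeasureTheory

/-- Conditional probability `Pr(A | B) = P(A ∩ B) / P(B)` as a real number. -/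
noncomputable def condProb {Ω : Type*} [MeasurableSpace Ω] (μ : Measure Ω) (A B : Set Ω) : ℝ :=
  (μ (A ∩ B)).toReal / (μ B).toReal

/-- Conditional expectation given an event: `E[W | B] = E[W · 1_B] / P(B)`. -/
noncomputable def condExpEvent {Ω : Type*} [MeasurableSpace Ω] (μ : Measure Ω)
    (W : Ω → ℝ) (B : Set Ω) : ℝ :=
  (∫ ω in B, W ω ∂μ) / (μ B).toReal

/-- under monotonicity and the conditional independence assumption,
`E[Z₁ − Z₀ | B] ≤ E[Y¹ − Y⁰ | B]` (Property 1, second claim). -/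
theorem stmt2 {Ω : Type*} [MeasurableSpace Ω] (μ : Measure Ω) [IsProbabilityMeasure μ]
    (B : Set Ω) (hBmeas : MeasurableSet B) (hBpos : 0 < μ B)
    (Y M : Fin 2 → Ω → ℝ)
    (hY01 : ∀ b ω, Y b ω = 0 ∨ Y b ω = 1)
    (hM01 : ∀ a ω, M a ω = 0 ∨ M a ω = 1)
    (hMmono : ∀ ω, M 0 ω ≤ M 1 ω)
    (hYmono : ∀ ω, Y 0 ω ≤ Y 1 ω)
    (hYmeas : ∀ b, Measurable (Y b)) (hMmeas : ∀ a, Measurable (M a))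
    (hindep : ∀ a b : Fin 2,
      condProb μ ({ω | Y b ω = 1} ∩ {ω | M a ω = 1}) B =
        condProb μ {ω | Y b ω = 1} B * condProb μ {ω | M a ω = 1} B)
    (Z : Fin 2 → Ω → ℝ)
    (hZ : ∀ a ω, Z a ω = M a ω * Y 1 ω + (1 - M a ω) * Y 0 ω) :
    condExpEvent μ (fun ω => Z 1 ω - Z 0 ω) B ≤
      condExpEvent μ (fun ω => Y 1 ω - Y 0 ω) B := by
  unfold condExpEvent
  have hint : ∀ (W : Ω → ℝ), Measurable W → (∀ ω, |W ω| ≤ 1) → IntegrableOn W B μ := by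
    intro W hm hb
    exact (Integrable.mono' (integrable_const 1) hm.aestronglyMeasurable
      (Filter.Eventually.of_forall fun ω => by simpa using hb ω)).integrableOn
  have hY1 : ∀ b ω, |Y b ω| ≤ 1 := by
    intro b ω; rcases hY01 b ω with h | h <;> simp [h]
  have hZeq : ∀ a ω, Z a ω = Y 0 ω ∨ Z a ω = Y 1 ω := by
    intro a ω; rcases hM01 a ω with h | h
    · left; rw [hZ]; rw [h]; ring
    · right; rw [hZ]; rw [h]; ring
  have hZ1 : ∀ a ω, |Z a ω| ≤ 1 := by
    intro a ω; rcases hZeq a ω with h | h <;> rw [h] <;> exact hY1 _ ω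
  have hZmeas : ∀ a, Measurable (Z a) := by
    intro a
    have : Z a = fun ω => M a ω * Y 1 ω + (1 - M a ω) * Y 0 ω := funext (hZ a)
    rw [this]
    exact ((hMmeas a).mul (hYmeas 1)).add
      ((measurable_const.sub (hMmeas a)).mul (hYmeas 0))
  have hIZ : IntegrableOn (fun ω => Z 1 ω - Z 0 ω) B μ :=
    ((hint _ (hZmeas 1) (hZ1 1)).sub (hint _ (hZmeas 0) (hZ1 0)))
  have hIY : IntegrableOn (fun ω => Y 1 ω - Y 0 ω) B μ :=
    ((hint _ (hYmeas 1) (hY1 1)).sub (hint _ (hYmeas 0) (hY1 0)))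
  have hle : ∀ ω ∈ B, Z 1 ω - Z 0 ω ≤ Y 1 ω - Y 0 ω := by
    intro ω _
    have h1 : M 1 ω ≤ 1 := by rcases hM01 1 ω with h | h <;> simp [h]
    have h2 : 0 ≤ M 0 ω := by rcases hM01 0 ω with h | h <;> simp [h]
    have h3 := hYmono ω
    rw [hZ, hZ]
    nlinarith [hMmono ω]
  have hnum : (∫ ω in B, (Z 1 ω - Z 0 ω) ∂μ) ≤ ∫ ω in B, (Y 1 ω - Y 0 ω) ∂μ :=
    setIntegral_mono_on hIZ hIY hBmeas hle
  have hd : 0 < (μ B).toReal :=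
    ENNReal.toReal_pos hBpos.ne' (measure_ne_top μ B)
  exact div_le_div_of_nonneg_right hnum hd.le
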